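/- arXiv:2303.06619 — 4 statements merged into one kernel-verified Lean document; each statement's English description precedes it below -/
import Mathlib

section
/- In a Coxeter system (W,S) with J ⊆ S, if w ∈ W^J is semi-chainlike (covers exactly one element w' of W^J in Bruhat order) then w = s·w' for some s ∈ S, and moreover every reduced expression for w begins with this s. -/
open CoxeterSystem

namespace CoxPaper

variable {B : Type*} {M : CoxeterMatrix B} {W : Type*} [Group W]

/-- The Bruhat order on `W`, via the subword property. -/
def BruhatLE (cs : CoxeterSystem M W) (u w : W) : Prop :=
  ∃ ω : List B, cs.IsReduced ω ∧ cs.wordProd ω = w ∧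
    ∃ υ : List B, υ.Sublist ω ∧ cs.wordProd υ = u

/-- The strict Bruhat order. -/
def BruhatLT (cs : CoxeterSystem M W) (u w : W) : Prop :=
  BruhatLE cs u w ∧ u ≠ w

/-- The standard parabolic subgroup `W_J`. -/
def Parabolic (cs : CoxeterSystem M W) (J : Set B) : Subgroup W :=
  Subgroup.closure (cs.simple '' J)

/-- `w` is the minimal-length representative of its coset `w W_J`; the set of such
elements is `W^J`. -/
def MinRep (cs : CoxeterSystem M W) (J : Set B) (w : W) : Prop :=
  ∀ u : W, w⁻¹ * u ∈ Parabolic cs J → cs.length w ≤ cs.length u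

/-- The covering relation `u ⋖ w` in the Bruhat order on `W^J`. -/
def Covers (cs : CoxeterSystem M W) (J : Set B) (u w : W) : Prop :=
  MinRep cs J u ∧ MinRep cs J w ∧ BruhatLT cs u w ∧ cs.length w = cs.length u + 1

/-- `w ∈ W^J` is semi-chainlike if it covers exactly one element of `W^J`. -/
def SemiChainlike (cs : CoxeterSystem M W) (J : Set B) (w : W) : Prop :=
  MinRep cs J w ∧ ∃! u : W, Covers cs J u w

/-- `l` is a saturated chain of covering relations in `W^J` from the identity to `w`. -/
def IsChainTo (cs : CoxeterSystem M W) (J : Set B) (l : List W) (w : W) : Prop :=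
  l.Chain' (Covers cs J) ∧ l.head? = some 1 ∧ l.getLast? = some w

/-- `w` is chainlike: there is a unique saturated chain of coverings `e ⋖ ⋯ ⋖ w` in `W^J`. -/
def Chainlike (cs : CoxeterSystem M W) (J : Set B) (w : W) : Prop :=
  MinRep cs J w ∧ w ≠ 1 ∧ ∃! l : List W, IsChainTo cs J l w

/-- `m(s,t) ≥ 3`, where the entry `0` denotes `∞`. -/
def Big (M : CoxeterMatrix B) (s t : B) : Prop := M s t = 0 ∨ 3 ≤ M s t

/-- The word `l = [s_k, …, s_1, s_0]` is (the reduced expression of) a simple element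
of `W^J`: the `sᵢ` are distinct, `s₀ ∈ S∖J`, `s₁, …, s_k ∈ J`, and `m(sᵢ,sⱼ) ≥ 3`
if and only if `|i - j| = 1`. -/
def Simple (cs : CoxeterSystem M W) (J : Set B) (l : List B) : Prop :=
  l ≠ [] ∧ l.Nodup ∧
  (∀ i : Fin l.length, (i.val + 1 < l.length → l.get i ∈ J) ∧
    (i.val + 1 = l.length → l.get i ∉ J)) ∧
  (∀ i j : Fin l.length, Big M (l.get i) (l.get j) ↔
    (i.val + 1 = j.val ∨ j.val + 1 = i.val)) ∧
  MinRep cs J (cs.wordProd l)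

/-- `L(u,v)`: the minimal length of an element of `W^J` above both `u` and `v`. -/
noncomputable def Lfun (cs : CoxeterSystem M W) (J : Set B) (u v : W) : ℕ :=
  sInf {n | ∃ w : W, MinRep cs J w ∧ BruhatLE cs u w ∧ BruhatLE cs v w ∧ cs.length w = n}

/-- `X(u,v)`: the elements of `W^J` above both `u` and `v` of minimal length `L(u,v)`. -/
def Xset (cs : CoxeterSystem M W) (J : Set B) (u v : W) : Set W :=
  {w | MinRep cs J w ∧ BruhatLE cs u w ∧ BruhatLE cs v w ∧
    cs.length w = Lfun cs J u v}

/-- The sets `Mᵢ(u,v)`. -/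
def Mset (cs : CoxeterSystem M W) (J : Set B) (u v : W) : ℕ → Set W
  | 0 => ∅
  | 1 => {u, v}
  | n + 2 => {w | MinRep cs J w ∧ ∀ z ∈ Mset cs J u v (n + 1), Covers cs J z w}

/-- `M(u,v) = min { i ≥ 2 : |Mᵢ(u,v)| = 1 }`, with value `∞` if there is no such `i`. -/
noncomputable def Mval (cs : CoxeterSystem M W) (J : Set B) (u v : W) : ℕ∞ :=
  sInf {i : ℕ∞ | ∃ n : ℕ, i = n ∧ 2 ≤ n ∧ ∃ w : W, Mset cs J u v n = {w}}

/-- The Coxeter matrix entry `m(s,t)` as an extended natural number (`0` ↦ `∞`). -/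
def entryE (M : CoxeterMatrix B) (s t : B) : ℕ∞ := if M s t = 0 then ⊤ else (M s t : ℕ∞)

/-! Concrete Coxeter matrices on `Fin n`. -/

/-- Symmetrization of a function of natural numbers. -/
def symmEntry (f : ℕ → ℕ → ℕ) (a b : ℕ) : ℕ := if a = b then 1 else f (min a b) (max a b)

theorem symmEntry_comm (f : ℕ → ℕ → ℕ) (a b : ℕ) : symmEntry f a b = symmEntry f b a := by
  unfold symmEntry
  rcases eq_or_ne a b with rfl | h
  · simp
  · rw [if_neg h, if_neg h.symm, min_comm, max_comm]

/-- A Coxeter matrix on `Fin n` given by a function on pairs `a < b`. -/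
def ofFun (n : ℕ) (f : ℕ → ℕ → ℕ) (hf : ∀ a b : ℕ, f a b ≠ 1) : CoxeterMatrix (Fin n) where
  M := Matrix.of fun i j => symmEntry f i.val j.val
  isSymm := by
    ext i j
    simpa only [Matrix.transpose_apply, Matrix.of_apply] using symmEntry_comm f j.val i.val
  diagonal := by intro i; simp [symmEntry]
  off_diagonal := by
    intro i j hij
    have h : i.val ≠ j.val := fun h => hij (Fin.ext h)
    simp only [Matrix.of_apply, symmEntry, if_neg h]
    exact hf _ _

/-- The word `[k-1, k-2, …, 1, 0]` in `Fin n` (the descending product `s_k ⋯ s_2 s_1`,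
with `sᵢ` corresponding to the index `i - 1`). -/
def descWord (n k : ℕ) : List (Fin n) :=
  (List.range k).reverse.filterMap fun i => if h : i < n then some ⟨i, h⟩ else none

namespace CoxRep

variable {B : Type*} (M : CoxeterMatrix B)

/-- bilinear form entries -/
noncomputable def kf (a b : B) : ℝ :=
  if M a b = 0 then -1 else -Real.cos (Real.pi / (M a b : ℝ))

lemma kf_symm (a b : B) : kf M a b = kf M b a := by
  unfold kf; rw [M.symmetric a b]

lemma kf_diag (a : B) : kf M a a = 1 := by
  unfold kf
  rw [M.diagonal a]
  norm_num

variable {W : Type*} [Group W]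

/-- the linear functional v ↦ B(e_a, v) -/
noncomputable def Bf (a : B) : (B →₀ ℝ) →ₗ[ℝ] ℝ :=
  Finsupp.linearCombination ℝ (kf M a)

lemma Bf_single (a b : B) (r : ℝ) : Bf M a (Finsupp.single b r) = r * kf M a b := by
  simp [Bf, Finsupp.linearCombination_single, smul_eq_mul]

/-- the reflection σ_a -/
noncomputable def sig (a : B) : Module.End ℝ (B →₀ ℝ) :=
  LinearMap.id - ((2:ℝ) • Bf M a).smulRight (Finsupp.single a 1)

lemma sig_apply (a : B) (v : B →₀ ℝ) :
    sig M a v = v - Finsupp.single a (2 * Bf M a v) := by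
  simp [sig, LinearMap.sub_apply, LinearMap.smulRight_apply, Finsupp.smul_single,
    smul_eq_mul, mul_one]

lemma sig_fix {a : B} {v : B →₀ ℝ} (h : Bf M a v = 0) : sig M a v = v := by
  simp [sig_apply, h]

lemma sig_sig (a : B) (v : B →₀ ℝ) : sig M a (sig M a v) = v := by
  rw [sig_apply, sig_apply, map_sub, Bf_single, kf_diag, mul_one]
  rw [show (2 : ℝ) * (Bf M a v - 2 * Bf M a v) = -(2 * Bf M a v) by ring]
  simp [Finsupp.single_neg]

lemma pow_fix {V : Type*} [AddCommGroup V] [Module ℝ V] (T : Module.End ℝ V) (v : V)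
    (h : T v = v) : ∀ n : ℕ, (T ^ n) v = v := by
  intro n
  induction n with
  | zero => simp
  | succ n ih => rw [pow_succ, Module.End.mul_apply, h, ih]

lemma sig_mul_sig_pow (a b : B) : (sig M a * sig M b) ^ (M a b) = 1 := by
  rcases eq_or_ne a b with rfl | hab
  · rw [M.diagonal a, pow_one]
    refine LinearMap.ext fun v => ?_
    simpa [Module.End.mul_apply] using sig_sig M a v
  rcases eq_or_ne (M a b) 0 with h0 | h0
  · rw [h0, pow_zero]
  -- the dihedral case
  set m : ℕ := M a b with hmdef
  have hm1 : m ≠ 1 := by simpa [hmdef] using M.off_diagonal a b hab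
  have hm2 : 2 ≤ m := by omega
  have hmR : (0:ℝ) < (m:ℝ) := by positivity
  set θ : ℝ := Real.pi / m with hθdef
  set c : ℝ := Real.cos θ with hcdef
  set sθ : ℝ := Real.sin θ with hsdef
  have hθpos : 0 < θ := div_pos Real.pi_pos hmR
  have hθlt : θ < Real.pi := by
    rw [hθdef, div_lt_iff₀ hmR]
    have h1m : (1:ℝ) < (m:ℝ) := by exact_mod_cast Nat.lt_of_lt_of_le one_lt_two hm2
    exact (lt_mul_iff_one_lt_right Real.pi_pos).mpr h1m
  have hs : 0 < sθ := Real.sin_pos_of_pos_of_lt_pi hθpos hθlt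
  have hss : sθ ^ 2 ≠ 0 := by positivity
  have hs2 : sθ ^ 2 = 1 - c ^ 2 := Real.sin_sq θ
  have hk : kf M a b = -c := by rw [kf, if_neg h0]
  have hk' : kf M b a = -c := by rw [← kf_symm, hk]
  -- the plane
  set P : ℝ → ℝ → (B →₀ ℝ) := fun x y => Finsupp.single a x + Finsupp.single b y with hP
  have hBa : ∀ x y, Bf M a (P x y) = x - c * y := by
    intro x y
    simp only [hP, map_add, Bf_single, kf_diag, hk]
    ring
  have hBb : ∀ x y, Bf M b (P x y) = -c * x + y := by
    intro x y
    simp only [hP, map_add, Bf_single, kf_diag, hk']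
    ring
  have hPsuba : ∀ x y r, P x y - Finsupp.single a r = P (x - r) y := by
    intro x y r
    simp only [hP, Finsupp.single_sub]
    abel
  have hPsubb : ∀ x y r, P x y - Finsupp.single b r = P x (y - r) := by
    intro x y r
    simp only [hP, Finsupp.single_sub]
    abel
  have hsigaP : ∀ x y, sig M a (P x y) = P (-x + 2*c*y) y := by
    intro x y
    rw [sig_apply, hBa, hPsuba]
    congr 1
    ring
  have hsigbP : ∀ x y, sig M b (P x y) = P x (2*c*x - y) := by
    intro x y
    rw [sig_apply, hBb, hPsubb]
    congr 1
    ring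
  set T : Module.End ℝ (B →₀ ℝ) := sig M a * sig M b with hT
  have hTP : ∀ x y, T (P x y) = P ((4*c^2-1)*x - 2*c*y) (2*c*x - y) := by
    intro x y
    rw [hT, Module.End.mul_apply, hsigbP, hsigaP]
    congr 1
    ring
  -- complex coordinates
  set φ : ℝ → ℝ → ℂ := fun x y => ⟨x - c*y, sθ*y⟩ with hφ
  set ζ : ℂ := ⟨2*c^2-1, 2*sθ*c⟩ with hζdef
  have hζ : ζ = Complex.exp ((2*θ : ℝ) * Complex.I) := by
    rw [Complex.exp_mul_I, ← Complex.ofReal_cos, ← Complex.ofReal_sin,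
      Real.cos_two_mul, Real.sin_two_mul]
    apply Complex.ext
    · simp only [hζdef, Complex.add_re, Complex.ofReal_re, Complex.mul_re, Complex.I_re,
        Complex.ofReal_im, Complex.I_im, ← hcdef, ← hsdef]
      ring
    · simp only [hζdef, Complex.add_im, Complex.ofReal_im, Complex.mul_im, Complex.I_im,
        Complex.ofReal_re, Complex.I_re, ← hcdef, ← hsdef]
      ring
  have hζm : ζ ^ m = 1 := by
    rw [hζ, ← Complex.exp_nat_mul]
    have hc : (m : ℂ) * ((2*θ : ℝ) * Complex.I) = 2 * (Real.pi : ℂ) * Complex.I := by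
      have hm0 : (m:ℂ) ≠ 0 := by exact_mod_cast hmR.ne'
      rw [hθdef]
      push_cast
      field_simp
    rw [hc, Complex.exp_two_pi_mul_I]
  have hφF : ∀ x y, φ ((4*c^2-1)*x - 2*c*y) (2*c*x - y) = ζ * φ x y := by
    intro x y
    apply Complex.ext
    · simp only [hφ, hζdef, Complex.mul_re]
      linear_combination (2*c*y) * hs2
    · simp only [hφ, hζdef, Complex.mul_im]
      ring
  have hφinj : ∀ x y X Y : ℝ, φ X Y = φ x y → X = x ∧ Y = y := by
    intro x y X Y h
    have him := congrArg Complex.im h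
    have hre := congrArg Complex.re h
    simp only [hφ] at him hre
    have hy : Y = y := mul_left_cancel₀ hs.ne' him
    refine ⟨?_, hy⟩
    rw [hy] at hre
    linarith
  have hTn : ∀ (n : ℕ) (x y : ℝ), ∃ X Y, (T ^ n) (P x y) = P X Y ∧ φ X Y = ζ ^ n * φ x y := by
    intro n
    induction n with
    | zero => intro x y; exact ⟨x, y, by simp, by simp⟩
    | succ n ih =>
      intro x y
      obtain ⟨X, Y, h1, h2⟩ := ih x y
      refine ⟨(4*c^2-1)*X - 2*c*Y, 2*c*X - Y, ?_, ?_⟩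
      · rw [pow_succ', Module.End.mul_apply, h1, hTP]
      · rw [hφF, h2, pow_succ']
        ring
  have hTm : ∀ x y, (T ^ m) (P x y) = P x y := by
    intro x y
    obtain ⟨X, Y, h1, h2⟩ := hTn m x y
    rw [hζm, one_mul] at h2
    obtain ⟨hX, hY⟩ := hφinj x y X Y h2
    rw [h1, hX, hY]
  -- conclude
  refine LinearMap.ext fun v => ?_
  obtain ⟨p, hp⟩ : ∃ p, Bf M a v = p := ⟨_, rfl⟩
  obtain ⟨q, hq⟩ : ∃ q, Bf M b v = q := ⟨_, rfl⟩
  obtain ⟨x, hx⟩ : ∃ x : ℝ, (p + c*q) / sθ^2 = x := ⟨_, rfl⟩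
  obtain ⟨y, hy⟩ : ∃ y : ℝ, (q + c*p) / sθ^2 = y := ⟨_, rfl⟩
  obtain ⟨v₀, hv₀⟩ : ∃ v₀, v - P x y = v₀ := ⟨_, rfl⟩
  have hxcy : x - c * y = p := by
    rw [← hx, ← hy]
    field_simp
    linear_combination (-p) * hs2
  have hycx : -c * x + y = q := by
    rw [← hx, ← hy]
    field_simp
    linear_combination (-q) * hs2
  have h0a : Bf M a v₀ = 0 := by
    rw [← hv₀, map_sub, hBa, hxcy, hp, sub_self]
  have h0b : Bf M b v₀ = 0 := by
    rw [← hv₀, map_sub, hBb, hycx, hq, sub_self]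
  have hTv₀ : T v₀ = v₀ := by
    rw [hT, Module.End.mul_apply, sig_fix M h0b, sig_fix M h0a]
  have hv : v = P x y + v₀ := by rw [← hv₀]; abel
  calc ((sig M a * sig M b) ^ m) v = (T ^ m) (P x y + v₀) := by rw [← hv, hT]
    _ = (T ^ m) (P x y) + (T ^ m) v₀ := map_add _ _ _
    _ = P x y + v₀ := by rw [hTm, pow_fix T v₀ hTv₀ m]
    _ = v := hv.symm

theorem simple_injective (cs : CoxeterSystem M W) : Function.Injective cs.simple := by
  have hf : M.IsLiftable (sig M) := fun i j => sig_mul_sig_pow M i j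
  intro i j hij
  by_contra hne
  have h1 : cs.lift ⟨sig M, hf⟩ (cs.simple i) = sig M i := cs.lift_apply_simple hf i
  have h2 : cs.lift ⟨sig M, hf⟩ (cs.simple j) = sig M j := cs.lift_apply_simple hf j
  have h3 : sig M i = sig M j := by rw [← h1, ← h2, hij]
  have h4 := congrArg (fun g : Module.End ℝ (B →₀ ℝ) => (g (Finsupp.single i (1:ℝ))) i) h3
  simp only [sig_apply, Bf_single, kf_diag, mul_one, one_mul, Finsupp.sub_apply,
    Finsupp.single_eq_same] at h4
  rw [Finsupp.single_eq_of_ne' (Ne.symm hne)] at h4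
  norm_num at h4

end CoxRep


section Statement3Aux

variable {B : Type*} {M : CoxeterMatrix B} {W : Type*} [Group W]

/-- If `w ∈ W^J` and `t :: rest` is a reduced word for `w`, then
`s t * w = π rest` is covered by `w` in `W^J`. -/
theorem covers_of_reduced_cons (cs : CoxeterSystem M W) (J : Set B) (w : W)
    (hw : MinRep cs J w) (t : B) (rest : List B)
    (hred : cs.IsReduced (t :: rest)) (hprod : cs.wordProd (t :: rest) = w) :
    Covers cs J (cs.simple t * w) w := by
  have hpr : cs.wordProd rest = cs.simple t * w := by
    rw [← hprod, cs.wordProd_cons, ← mul_assoc, cs.simple_mul_simple_self, one_mul]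
  have hwu : w = cs.simple t * (cs.wordProd rest) := by
    rw [hpr, ← mul_assoc, cs.simple_mul_simple_self, one_mul]
  have hlu1 : cs.length (cs.wordProd rest) ≤ rest.length := cs.length_wordProd_le rest
  have hlw : cs.length w = rest.length + 1 := by
    rw [← hprod]
    simpa [CoxeterSystem.IsReduced] using hred
  have hlw2 : cs.length w ≤ cs.length (cs.wordProd rest) + 1 := by
    calc cs.length w = cs.length (cs.simple t * cs.wordProd rest) := by rw [← hwu]
      _ ≤ cs.length (cs.simple t) + cs.length (cs.wordProd rest) := cs.length_mul_le _ _
      _ = cs.length (cs.wordProd rest) + 1 := by rw [cs.length_simple]; ring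
  have hlen : cs.length w = cs.length (cs.wordProd rest) + 1 := by omega
  have hmin : MinRep cs J (cs.wordProd rest) := by
    intro z hz
    have hz' : w⁻¹ * (cs.simple t * z) ∈ Parabolic cs J := by
      have he : w⁻¹ * (cs.simple t * z) = (cs.wordProd rest)⁻¹ * z := by
        rw [hwu, mul_inv_rev, cs.inv_simple, mul_assoc, ← mul_assoc (cs.simple t),
          cs.simple_mul_simple_self, one_mul]
      rw [he]
      exact hz
    have h1 : cs.length w ≤ cs.length (cs.simple t * z) := hw _ hz'
    have h2 : cs.length (cs.simple t * z) ≤ cs.length z + 1 := by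
      calc cs.length (cs.simple t * z) ≤ cs.length (cs.simple t) + cs.length z :=
            cs.length_mul_le _ _
        _ = cs.length z + 1 := by rw [cs.length_simple]; ring
    omega
  have hble : BruhatLE cs (cs.wordProd rest) w :=
    ⟨t :: rest, hred, hprod, rest, List.sublist_cons_self t rest, rfl⟩
  have hne : cs.wordProd rest ≠ w := by
    intro h
    rw [h] at hlen
    omega
  have : Covers cs J (cs.wordProd rest) w := ⟨hmin, hw, ⟨hble, hne⟩, hlen⟩
  rwa [hpr] at this

end Statement3Aux

/-- if `w ∈ W^J` is semi-chainlike, covering exactly the element `w'`,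
then `w = s·w'` for some `s ∈ S`, and every reduced expression for `w` begins with `s`. -/
theorem statement_3 (cs : CoxeterSystem M W) (J : Set B) (w w' : W)
    (hw : MinRep cs J w) (hcov : Covers cs J w' w)
    (huniq : ∀ u : W, Covers cs J u w → u = w') :
    ∃ s : B, w = cs.simple s * w' ∧
      ∀ ω : List B, cs.IsReduced ω → cs.wordProd ω = w → ω.head? = some s := by
  have hlw : cs.length w = cs.length w' + 1 := hcov.2.2.2
  have key : ∀ ω : List B, cs.IsReduced ω → cs.wordProd ω = w →
      ∃ t rest, ω = t :: rest ∧ cs.simple t * w = w' := by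
    intro ω hr hp
    match ω with
    | [] =>
      exfalso
      have : w = 1 := by rw [← hp, cs.wordProd_nil]
      rw [this, cs.length_one] at hlw
      omega
    | t :: rest =>
      refine ⟨t, rest, rfl, ?_⟩
      exact huniq _ (covers_of_reduced_cons cs J w hw t rest hr hp)
  obtain ⟨ω₀, hred₀, hprod₀⟩ := cs.exists_reduced_word' w
  obtain ⟨s, rest₀, hω₀, hs⟩ := key ω₀ hred₀ hprod₀.symm
  refine ⟨s, ?_, ?_⟩
  · rw [← hs, ← mul_assoc, cs.simple_mul_simple_self, one_mul]
  · intro ω hr hp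
    obtain ⟨t, rest, rfl, ht⟩ := key ω hr hp
    have hts : cs.simple t = cs.simple s := by
      have := ht.trans hs.symm
      exact mul_right_cancel this
    have : t = s := CoxRep.simple_injective _ cs hts
    rw [this]
    rfl


end CoxPaper
end

section
/- In a Coxeter system (W,S) with J ⊆ S, every chainlike element of W^J has a unique reduced expression. -/
open CoxeterSystem

namespace CoxPaper

variable {B : Type*} {M : CoxeterMatrix B} {W : Type*} [Group W]

noncomputable section Inj

def zeta (m : ℕ) : ℂ := Complex.exp (Real.pi * Complex.I / m)

lemma zeta_ne_zero (m : ℕ) : zeta m ≠ 0 := Complex.exp_ne_zero _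

lemma zeta_pow (m : ℕ) (hm : m ≠ 0) : (zeta m) ^ (2 * m) = 1 := by
  rw [zeta, ← Complex.exp_nat_mul]
  have : (↑(2 * m) : ℂ) * (Real.pi * Complex.I / m) = 2 * Real.pi * Complex.I := by
    have hm' : (m : ℂ) ≠ 0 := Nat.cast_ne_zero.mpr hm
    push_cast
    field_simp
  rw [this, Complex.exp_two_pi_mul_I]

lemma zeta_sq_ne_one {m : ℕ} (hm : 2 ≤ m) : (zeta m) ^ 2 ≠ 1 := by
  intro h
  rw [zeta, ← Complex.exp_nat_mul, Complex.exp_eq_one_iff] at h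
  obtain ⟨n, hn⟩ := h
  have hm' : (m : ℂ) ≠ 0 := Nat.cast_ne_zero.mpr (by omega)
  have hpi : (Real.pi : ℂ) ≠ 0 := Complex.ofReal_ne_zero.mpr Real.pi_ne_zero
  have hI : Complex.I ≠ 0 := Complex.I_ne_zero
  have hn' : 2 * ((Real.pi:ℂ) * Complex.I) = ↑n * (2 * ↑Real.pi * Complex.I) * ↑m := by
    rw [← hn]
    push_cast
    field_simp
  have key : (n:ℂ) * ↑m = 1 := by
    have h2 : (2 : ℂ) * (↑Real.pi * Complex.I) ≠ 0 := by simp [hpi, hI]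
    have h3 : 2 * ((Real.pi:ℂ) * Complex.I) * ((n:ℂ) * ↑m) = 2 * (↑Real.pi * Complex.I) * 1 := by
      linear_combination -hn'
    exact mul_left_cancel₀ h2 h3
  have hint : (n * m : ℤ) = 1 := by exact_mod_cast key
  have hdvd : (m : ℤ) ∣ 1 := ⟨n, by linarith⟩
  have := Int.le_of_dvd one_pos hdvd
  omega

lemma zeta_one : zeta 1 = -1 := by
  rw [zeta]
  push_cast
  rw [div_one, Complex.exp_pi_mul_I]

def cval (m : ℕ) : ℂ := -(zeta m + (zeta m)⁻¹) / 2

lemma cval_one : cval 1 = 1 := by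
  rw [cval, zeta_one]
  norm_num

def evec (k : B) : B →₀ ℂ := Finsupp.single k 1

def fform (M : CoxeterMatrix B) (k : B) : (B →₀ ℂ) →ₗ[ℂ] ℂ :=
  Finsupp.linearCombination ℂ (fun l => cval (M l k))

lemma fform_evec (k l : B) : fform M k (evec l) = cval (M l k) := by
  rw [fform, evec, Finsupp.linearCombination_single, one_smul]

def sigmaRep (M : CoxeterMatrix B) (k : B) : Module.End ℂ (B →₀ ℂ) :=
  LinearMap.id - (LinearMap.toSpanSingleton ℂ (B →₀ ℂ) (evec k)) ∘ₗ ((2 : ℂ) • fform M k)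

lemma sigmaRep_apply (k : B) (v : B →₀ ℂ) :
    sigmaRep M k v = v - (2 * fform M k v) • evec k := by
  simp only [sigmaRep, LinearMap.sub_apply, LinearMap.id_apply, LinearMap.comp_apply,
    LinearMap.smul_apply, LinearMap.toSpanSingleton_apply, smul_eq_mul]

lemma sigmaRep_evec (k l : B) :
    sigmaRep M k (evec l) = evec l - (2 * cval (M l k)) • evec k := by
  rw [sigmaRep_apply, fform_evec]

lemma sigmaRep_evec_self (k : B) : sigmaRep M k (evec k) = - evec k := by
  rw [sigmaRep_evec, M.diagonal k, cval_one]
  module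

lemma sigmaRep_invol (k : B) : sigmaRep M k * sigmaRep M k = 1 := by
  apply LinearMap.ext
  intro v
  have h1 : (sigmaRep M k * sigmaRep M k) v = sigmaRep M k (sigmaRep M k v) := rfl
  have h2 : fform M k (sigmaRep M k v) = - fform M k v := by
    rw [sigmaRep_apply, map_sub, map_smul, fform_evec, M.diagonal k, cval_one,
      smul_eq_mul, mul_one]
    ring
  rw [h1, sigmaRep_apply (v := sigmaRep M k v), h2, sigmaRep_apply]
  have : (1 : Module.End ℂ (B →₀ ℂ)) v = v := rfl
  rw [this]
  module


section Dihedral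

variable {k l : B} (hkl : k ≠ l) (hm : 2 ≤ M k l)

lemma dihedral_rel {k l : B} (hkl : k ≠ l) (hm : 2 ≤ M k l) :
    (sigmaRep M k * sigmaRep M l) ^ (M k l) = 1 := by
  set m := M k l with hmdef
  set ζ := zeta m with hζdef
  have hζ0 : ζ ≠ 0 := zeta_ne_zero m
  have hζ2m : ζ ^ (2 * m) = 1 := zeta_pow m (by omega)
  have hζsq : ζ ^ 2 ≠ 1 := zeta_sq_ne_one hm
  have hsym : M l k = m := M.symmetric l k
  have hd : 2 * cval m = -(ζ + ζ⁻¹) := by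
    rw [cval, ← hζdef]
    ring
  have hζζ : ζ * ζ⁻¹ = 1 := mul_inv_cancel₀ hζ0
  set T := sigmaRep M k * sigmaRep M l with hTdef
  have hTapp : ∀ v, T v = sigmaRep M k (sigmaRep M l v) := fun v => rfl
  set wp : B →₀ ℂ := evec k + ζ⁻¹ • evec l with hwp
  set wm : B →₀ ℂ := evec k + ζ • evec l with hwm
  have hσl_ek : sigmaRep M l (evec k) = evec k - (2 * cval m) • evec l := by
    rw [sigmaRep_evec, hmdef]
  have hσl_el : sigmaRep M l (evec l) = - evec l := sigmaRep_evec_self l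
  have hσk_ek : sigmaRep M k (evec k) = - evec k := sigmaRep_evec_self k
  have hσk_el : sigmaRep M k (evec l) = evec l - (2 * cval m) • evec k := by
    rw [sigmaRep_evec, hsym]
  -- σl wp = wm
  have h1 : sigmaRep M l wp = wm := by
    rw [hwp, map_add, map_smul, hσl_ek, hσl_el, hd, hwm]
    module
  -- σl wm = wp
  have h2 : sigmaRep M l wm = wp := by
    rw [hwm, map_add, map_smul, hσl_ek, hσl_el, hd, hwp]
    module
  -- σk wm = ζ² • wp
  have h3 : sigmaRep M k wm = (ζ^2) • wp := by
    rw [hwm, map_add, map_smul, hσk_ek, hσk_el, hd, hwp]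
    match_scalars <;> (field_simp; try ring)
  -- σk wp = (ζ²)⁻¹ • wm
  have h4 : sigmaRep M k wp = ((ζ^2)⁻¹) • wm := by
    rw [hwp, map_add, map_smul, hσk_ek, hσk_el, hd, hwm]
    match_scalars <;> (field_simp; try ring)
  have hTwp : T wp = (ζ^2) • wp := by rw [hTapp, h1, h3]
  have hTwm : T wm = ((ζ^2)⁻¹) • wm := by rw [hTapp, h2, h4]
  -- powers act by scalars on wp, wm
  have hTpow : ∀ (x : B →₀ ℂ) (μ : ℂ), T x = μ • x → ∀ r : ℕ, (T^r) x = (μ^r) • x := by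
    intro x μ hx r
    induction r with
    | zero => simp
    | succ n ih =>
      rw [pow_succ', Module.End.mul_apply, ih, map_smul, hx, smul_smul, ← pow_succ]
  -- geometric sums vanish
  have hgeom : ∀ (μ : ℂ), μ ≠ 1 → μ ^ m = 1 → (∑ r ∈ Finset.range m, μ ^ r) = 0 := by
    intro μ hμ hμm
    rw [geom_sum_eq hμ, hμm, sub_self, zero_div]
  have hζ2m' : (ζ^2) ^ m = 1 := by rw [← pow_mul]; exact hζ2m
  have hζ2inv : ((ζ^2)⁻¹) ^ m = 1 := by rw [inv_pow, hζ2m', inv_one]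
  have hζ2inv_ne : (ζ^2)⁻¹ ≠ 1 := by
    intro h; apply hζsq; rw [← inv_inv (ζ^2), h, inv_one]
  set S : Module.End ℂ (B →₀ ℂ) := ∑ r ∈ Finset.range m, T^r with hS
  have hSwp : S wp = 0 := by
    rw [hS, LinearMap.sum_apply]
    have : ∀ r ∈ Finset.range m, (T^r) wp = (ζ^2)^r • wp := fun r _ => hTpow wp _ hTwp r
    rw [Finset.sum_congr rfl this, ← Finset.sum_smul, hgeom _ hζsq hζ2m', zero_smul]
  have hSwm : S wm = 0 := by
    rw [hS, LinearMap.sum_apply]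
    have : ∀ r ∈ Finset.range m, (T^r) wm = ((ζ^2)⁻¹)^r • wm := fun r _ => hTpow wm _ hTwm r
    rw [Finset.sum_congr rfl this, ← Finset.sum_smul, hgeom _ hζ2inv_ne hζ2inv, zero_smul]
  -- S kills evec l and evec k
  have hdiffne : ζ - ζ⁻¹ ≠ 0 := by
    intro h
    apply hζsq
    linear_combination ζ * h + hζζ
  have hel : (ζ - ζ⁻¹) • evec l = wm - wp := by
    rw [hwm, hwp]
    module
  have hSel : S (evec l) = 0 := by
    have : S ((ζ - ζ⁻¹) • evec l) = 0 := by rw [hel, map_sub, hSwm, hSwp, sub_zero]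
    rw [map_smul] at this
    rcases smul_eq_zero.mp this with h | h
    · exact absurd h hdiffne
    · exact h
  have hSek : S (evec k) = 0 := by
    have hek : evec k = wp - ζ⁻¹ • evec l := by rw [hwp]; module
    rw [hek, map_sub, hSwp, map_smul, hSel, smul_zero, sub_zero]
  -- T v - v lies in span of evec k, evec l
  have hTv : ∀ v : B →₀ ℂ, S (T v - v) = 0 := by
    intro v
    have hdecomp : T v - v =
        (-(2 * fform M k (sigmaRep M l v))) • evec k + (-(2 * fform M l v)) • evec l := by
      rw [hTapp, sigmaRep_apply k, sigmaRep_apply l]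
      module
    rw [hdecomp, map_add, map_smul, map_smul, hSek, hSel, smul_zero, smul_zero, add_zero]
  -- power formula
  have hpowf : ∀ (n : ℕ) (v : B →₀ ℂ),
      (T^n) v = v + ∑ r ∈ Finset.range n, (T^r) (T v - v) := by
    intro n
    induction n with
    | zero => intro v; simp
    | succ n ih =>
      intro v
      have : (T^(n+1)) v = (T^n) (T v) := by rw [pow_succ, Module.End.mul_apply]
      rw [this, ih (T v)]
      have hshift : ∀ r : ℕ, (T^r) (T (T v) - T v) = (T^(r+1)) (T v - v) := by
        intro r
        rw [← map_sub]
        conv_rhs => rw [pow_succ, Module.End.mul_apply]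
      rw [Finset.sum_congr rfl (fun r _ => hshift r)]
      rw [Finset.sum_range_succ' (fun r => (T^r) (T v - v)) n]
      have h0 : (T^0) (T v - v) = T v - v := by simp
      rw [h0]
      abel
  apply LinearMap.ext
  intro v
  rw [hpowf m v, ← LinearMap.sum_apply, ← hS, hTv v, add_zero]
  rfl

lemma sigmaRep_liftable : M.IsLiftable (fun k => sigmaRep M k) := by
  intro k l
  rcases eq_or_ne k l with rfl | hkl
  · rw [M.diagonal k, pow_one]
    exact sigmaRep_invol k
  rcases Nat.eq_zero_or_pos (M k l) with h0 | hpos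
  · rw [h0, pow_zero]
  · have h1 : M k l ≠ 1 := M.off_diagonal k l hkl
    exact dihedral_rel hkl (by omega)

lemma simple_injective (cs : CoxeterSystem M W) : Function.Injective cs.simple := by
  intro i j h
  by_contra hij
  have h1 : sigmaRep M i = sigmaRep M j := by
    have := congrArg (cs.lift ⟨fun k => sigmaRep M k, sigmaRep_liftable⟩) h
    rwa [cs.lift_apply_simple, cs.lift_apply_simple] at this
  have h2 : sigmaRep M i (evec i) = sigmaRep M j (evec i) := by rw [h1]
  rw [sigmaRep_evec_self, sigmaRep_evec] at h2
  have h3 := DFunLike.congr_fun h2 i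
  rw [Finsupp.neg_apply, Finsupp.sub_apply, Finsupp.smul_apply] at h3
  rw [evec, evec, Finsupp.single_eq_same, Finsupp.single_eq_of_ne' (Ne.symm hij)] at h3
  exact absurd h3 (by norm_num)

end Dihedral
end Inj

/-! ### Chains from reduced words -/

section Chains

variable (cs : CoxeterSystem M W) (J : Set B)

/-- Every suffix of a reduced word of an element of `W^J` is again (a reduced word of)
an element of `W^J`. -/
lemma minRep_drop {ω : List B} (hred : cs.IsReduced ω) (hmin : MinRep cs J (cs.wordProd ω))
    (j : ℕ) : MinRep cs J (cs.wordProd (ω.drop j)) := by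
  intro v hv
  have hsplit : ω = ω.take j ++ ω.drop j := (List.take_append_drop j ω).symm
  have hprod : cs.wordProd ω = cs.wordProd (ω.take j) * cs.wordProd (ω.drop j) := by
    nth_rw 1 [hsplit]
    exact cs.wordProd_append _ _
  have hv' : (cs.wordProd ω)⁻¹ * (cs.wordProd (ω.take j) * v) ∈ Parabolic cs J := by
    rw [hprod, mul_inv_rev, mul_assoc, inv_mul_cancel_left]
    exact hv
  have h1 : cs.length (cs.wordProd ω) ≤ cs.length (cs.wordProd (ω.take j) * v) :=
    hmin _ hv'
  have h2 : cs.length (cs.wordProd (ω.take j) * v) ≤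
      cs.length (cs.wordProd (ω.take j)) + cs.length v := cs.length_mul_le _ _
  have h3 : cs.length (cs.wordProd (ω.take j)) ≤ (ω.take j).length :=
    cs.length_wordProd_le _
  have h4 : cs.length (cs.wordProd ω) = ω.length := hred
  have h5 : cs.length (cs.wordProd (ω.drop j)) ≤ (ω.drop j).length :=
    cs.length_wordProd_le _
  have h6 : (ω.take j).length + (ω.drop j).length = ω.length := by
    rw [List.length_take, List.length_drop]
    omega
  omega

/-- Consecutive suffixes of a reduced word of an element of `W^J` form covering pairs. -/
lemma covers_drop {ω : List B} (hred : cs.IsReduced ω) (hmin : MinRep cs J (cs.wordProd ω))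
    {j : ℕ} (hj : j < ω.length) :
    Covers cs J (cs.wordProd (ω.drop (j + 1))) (cs.wordProd (ω.drop j)) := by
  have hsub : List.Sublist (ω.drop (j + 1)) (ω.drop j) := by
    have h1 : ω.drop (j + 1) = (ω.drop j).drop 1 := by
      rw [List.drop_drop]
    rw [h1]
    exact List.drop_sublist 1 _
  have hlen1 : cs.length (cs.wordProd (ω.drop j)) = ω.length - j := by
    have := hred.drop j
    rw [this, List.length_drop]
  have hlen2 : cs.length (cs.wordProd (ω.drop (j + 1))) = ω.length - (j + 1) := by
    have := hred.drop (j + 1)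
    rw [this, List.length_drop]
  refine ⟨minRep_drop cs J hred hmin (j + 1), minRep_drop cs J hred hmin j, ⟨?_, ?_⟩, ?_⟩
  · exact ⟨ω.drop j, hred.drop j, rfl, ω.drop (j + 1), hsub, rfl⟩
  · intro h
    rw [h] at hlen2
    omega
  · omega

/-- The chain of suffix products of a word. -/
def chainOf (ω : List B) : List W :=
  (List.range (ω.length + 1)).map fun i => cs.wordProd (ω.drop (ω.length - i))

lemma chainOf_length (ω : List B) : (chainOf cs ω).length = ω.length + 1 := by
  simp [chainOf]

lemma chainOf_getElem (ω : List B) {i : ℕ} (hi : i < ω.length + 1) :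
    (chainOf cs ω)[i]'(by rw [chainOf_length]; exact hi) =
      cs.wordProd (ω.drop (ω.length - i)) := by
  simp [chainOf]

lemma chainOf_isChainTo {ω : List B} (hred : cs.IsReduced ω)
    (hmin : MinRep cs J (cs.wordProd ω)) :
    IsChainTo cs J (chainOf cs ω) (cs.wordProd ω) := by
  refine ⟨?_, ?_, ?_⟩
  · refine List.isChain_iff_getElem.mpr ?_
    intro i hi
    rw [chainOf_length] at hi
    have hi' : i < ω.length := by omega
    rw [chainOf_getElem cs ω (show i < ω.length + 1 by omega),
      chainOf_getElem cs ω (show i + 1 < ω.length + 1 by omega)]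
    have e1 : ω.length - i = (ω.length - (i + 1)) + 1 := by omega
    rw [e1]
    exact covers_drop cs J hred hmin (by omega)
  · have h0 : (chainOf cs ω)[0]? = some (cs.wordProd (ω.drop (ω.length - 0))) := by
      rw [List.getElem?_eq_getElem (by rw [chainOf_length]; omega),
        chainOf_getElem cs ω (by omega)]
    rw [← List.head?_eq_getElem?] at h0
    rw [h0, Nat.sub_zero, List.drop_length, cs.wordProd_nil]
  · have h0 : (chainOf cs ω)[ω.length]? =
        some (cs.wordProd (ω.drop (ω.length - ω.length))) := by
      rw [List.getElem?_eq_getElem (by rw [chainOf_length]; omega),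
        chainOf_getElem cs ω (by omega)]
    rw [List.getLast?_eq_getElem?, chainOf_length]
    simpa using h0

lemma chainOf_injective {ω ω' : List B}
    (heq : chainOf cs ω = chainOf cs ω') : ω = ω' := by
  have hlen : ω.length = ω'.length := by
    have := congrArg List.length heq
    rw [chainOf_length, chainOf_length] at this
    omega
  set n := ω.length with hn
  have hπ : ∀ j : ℕ, cs.wordProd (ω.drop j) = cs.wordProd (ω'.drop j) := by
    intro j
    rcases le_or_gt j n with hj | hj
    · have hlt : n - j < (chainOf cs ω).length := by rw [chainOf_length]; omega
      have hlt' : n - j < (chainOf cs ω').length := by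
        rw [chainOf_length, ← hlen]; omega
      have e1 : (chainOf cs ω)[n - j]? = (chainOf cs ω')[n - j]? := by rw [heq]
      rw [List.getElem?_eq_getElem hlt, List.getElem?_eq_getElem hlt'] at e1
      have e2 := Option.some.inj e1
      rw [chainOf_getElem cs ω (show n - j < ω.length + 1 by omega),
        chainOf_getElem cs ω' (show n - j < ω'.length + 1 by omega)] at e2
      have e3 : ω.length - (n - j) = j := by omega
      have e4 : ω'.length - (n - j) = j := by omega
      rwa [e3, e4] at e2
    · rw [List.drop_eq_nil_of_le (by omega), List.drop_eq_nil_of_le (by omega)]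
  have key : ∀ d : ℕ, ω.drop (n - d) = ω'.drop (n - d) := by
    intro d
    induction d with
    | zero =>
      rw [Nat.sub_zero, List.drop_eq_nil_of_le (le_refl n),
        List.drop_eq_nil_of_le (by omega)]
    | succ d ih =>
      rcases le_or_gt (d + 1) n with hd | hd
      · have hj : n - (d + 1) < ω.length := by omega
        have hj' : n - (d + 1) < ω'.length := by omega
        have e1 : n - (d + 1) + 1 = n - d := by omega
        have hπj := hπ (n - (d + 1))
        rw [List.drop_eq_getElem_cons hj, List.drop_eq_getElem_cons hj', e1, ih,
          cs.wordProd_cons, cs.wordProd_cons] at hπj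
        have hsimple : cs.simple (ω[n - (d + 1)]) = cs.simple (ω'[n - (d + 1)]) :=
          mul_right_cancel hπj
        rw [List.drop_eq_getElem_cons hj, List.drop_eq_getElem_cons hj', e1, ih,
          simple_injective cs hsimple]
      · have e1 : n - (d + 1) = n - d := by omega
        rw [e1, ih]
  have := key n
  rwa [Nat.sub_self, List.drop_zero, List.drop_zero] at this

end Chains

/-- every chainlike element of `W^J` has a unique reduced expression. -/
theorem statement_4 (cs : CoxeterSystem M W) (J : Set B) (w : W)
    (hw : Chainlike cs J w) :
    ∃! ω : List B, cs.IsReduced ω ∧ cs.wordProd ω = w := by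
  obtain ⟨hmin, hne, hchain⟩ := hw
  obtain ⟨l₀, hl₀, hluniq⟩ := hchain
  obtain ⟨ω₀, hred₀, hprod₀⟩ := cs.exists_reduced_word' w
  refine ⟨ω₀, ⟨hred₀, hprod₀.symm⟩, ?_⟩
  rintro ω' ⟨hred', hprod'⟩
  have hchain' : IsChainTo cs J (chainOf cs ω') w := by
    have := chainOf_isChainTo cs J (ω := ω') hred' (by rw [hprod']; exact hmin)
    rwa [hprod'] at this
  have hchain₀ : IsChainTo cs J (chainOf cs ω₀) w := by
    have := chainOf_isChainTo cs J (ω := ω₀) hred₀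
      (by rw [← hprod₀]; exact hmin)
    rwa [hprod₀]
  have h1 := hluniq _ hchain'
  have h2 := hluniq _ hchain₀
  exact chainOf_injective cs (h1.trans h2.symm)

end CoxPaper
end

section
/- Let (W,S) be a Coxeter system, J ⊆ S, and let u = s·u' and v = t·u' be simple chainlike elements of W^J with the same u' (s,t ∈ S their leftmost generators). Then u ∼ v if and only if s = t, where ∼ is defined by L(u,v) = L(u',v) = L(u,v'). -/
open CoxeterSystem

namespace CoxPaper

variable {B : Type*} {M : CoxeterMatrix B} {W : Type*} [Group W]

section GeomRep
open Real


/-! ### The geometric representation, used to prove injectivity of `cs.simple` -/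

noncomputable def bil (M : CoxeterMatrix B) (i k : B) : ℝ := open scoped Classical in
  if i = k then 1 else -Real.cos (π / M i k)

noncomputable def pairL (M : CoxeterMatrix B) (i : B) : (B →₀ ℝ) →ₗ[ℝ] ℝ :=
  Finsupp.linearCombination ℝ (fun k => bil M i k)

@[simp] theorem pairL_single (M : CoxeterMatrix B) (i k : B) :
    pairL M i (Finsupp.single k 1) = bil M i k := by
  simp [pairL]

@[simp] theorem pairL_single' (M : CoxeterMatrix B) (i k : B) (a : ℝ) :
    pairL M i (Finsupp.single k a) = a * bil M i k := by
  simp [pairL, smul_eq_mul]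

noncomputable def grefl (M : CoxeterMatrix B) (i : B) : Module.End ℝ (B →₀ ℝ) :=
  LinearMap.id - (2:ℝ) • (pairL M i).smulRight (Finsupp.single i 1)

theorem grefl_apply (M : CoxeterMatrix B) (i : B) (v : B →₀ ℝ) :
    grefl M i v = v - (2 * pairL M i v) • Finsupp.single i 1 := by
  simp [grefl, mul_smul]

theorem bil_self (M : CoxeterMatrix B) (i : B) : bil M i i = 1 := by simp [bil]

theorem bil_symm (M : CoxeterMatrix B) (i j : B) : bil M i j = bil M j i := by
  unfold bil
  rcases eq_or_ne i j with rfl | h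
  · rfl
  · rw [if_neg h, if_neg (Ne.symm h), M.symmetric i j]

theorem bil_ne (M : CoxeterMatrix B) {i j : B} (h : i ≠ j) :
    bil M i j = -Real.cos (π / M i j) := by
  rw [bil, if_neg h]

theorem grefl_sq (M : CoxeterMatrix B) (i : B) : grefl M i * grefl M i = 1 := by
  apply LinearMap.ext
  intro v
  rw [Module.End.mul_apply, grefl_apply, grefl_apply, map_sub, map_smul, pairL_single,
    bil_self, Module.End.one_apply]
  rw [smul_eq_mul, mul_one]
  module

noncomputable def Amat (c : ℝ) : Matrix (Fin 2) (Fin 2) ℝ :=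
  !![4*c^2 - 1, -2*c; 2*c, -1]

theorem Amat_sq (c : ℝ) : Amat c * Amat c = (4*c^2 - 2) • Amat c - 1 := by
  ext i j
  fin_cases i <;> fin_cases j <;>
    simp [Amat, Matrix.mul_apply, Fin.sum_univ_two, Matrix.one_apply] <;> ring_nf

theorem sin_smul_Amat_pow (m : ℕ) (n : ℕ) :
    Real.sin (2*π/m) • (Amat (Real.cos (π/m))) ^ n =
      Real.sin (2*n*π/m) • Amat (Real.cos (π/m)) - Real.sin (2*((n:ℝ)-1)*π/m) • 1 := by
  set c := Real.cos (π/m) with hc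
  induction n with
  | zero =>
    rw [pow_zero, Nat.cast_zero, show 2*((0:ℝ)-1)*π/(m:ℝ) = -(2*π/(m:ℝ)) by ring,
      Real.sin_neg, show 2*(0:ℝ)*π/(m:ℝ) = 0 by ring, Real.sin_zero]
    module
  | succ n ih =>
    have hcast : ((n+1:ℕ):ℝ) = (n:ℝ)+1 := by push_cast; ring
    have hcos : 4*c^2 - 2 = 2 * Real.cos (2*π/m) := by
      rw [hc, show (2:ℝ)*π/m = 2*(π/m) by ring, Real.cos_two_mul]; ring
    have hsin : Real.sin (2*((n:ℝ)+1)*π/m)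
        = 2 * Real.cos (2*π/m) * Real.sin (2*(n:ℝ)*π/m) - Real.sin (2*((n:ℝ)-1)*π/m) := by
      have e1 : 2*((n:ℝ)+1)*π/m = 2*(n:ℝ)*π/m + 2*π/m := by ring
      have e2 : 2*((n:ℝ)-1)*π/m = 2*(n:ℝ)*π/m - 2*π/m := by ring
      rw [e1, e2, Real.sin_add, Real.sin_sub]; ring
    have e3 : 2*((n:ℝ)+1-1)*π/m = 2*(n:ℝ)*π/m := by ring
    rw [pow_succ, ← smul_mul_assoc, ih, sub_mul, smul_mul_assoc, smul_mul_assoc, one_mul,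
      Amat_sq, hcast, e3, hsin, ← hcos]
    module

theorem Amat_pow_eq_one (m : ℕ) (hm : 2 ≤ m) :
    (Amat (Real.cos (π/m))) ^ m = 1 := by
  rcases eq_or_lt_of_le hm with h2 | h3
  · subst h2
    have hc0 : Real.cos (π/((2:ℕ):ℝ)) = 0 := by norm_num [Real.cos_pi_div_two]
    have hA : Amat (Real.cos (π/((2:ℕ):ℝ))) = Amat 0 := by rw [hc0]
    rw [hA, pow_two]
    ext i j
    fin_cases i <;> fin_cases j <;>
      simp [Amat, Matrix.mul_apply, Fin.sum_univ_two, Matrix.one_apply]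
  · have hm3 : 3 ≤ m := h3
    have hmpos : (0:ℝ) < m := by positivity
    have h3r : (3:ℝ) ≤ m := by exact_mod_cast hm3
    have hsin : Real.sin (2*π/m) ≠ 0 := by
      apply ne_of_gt
      apply Real.sin_pos_of_pos_of_lt_pi
      · positivity
      · rw [div_lt_iff₀ hmpos]
        nlinarith [Real.pi_pos, mul_le_mul_of_nonneg_left h3r Real.pi_pos.le]
    have h := sin_smul_Amat_pow m m
    have e0 : Real.sin (2*m*π/m) = 0 := by
      rw [show 2*(m:ℝ)*π/m = 2*π by field_simp, Real.sin_two_pi]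
    have e1 : Real.sin (2*((m:ℝ)-1)*π/m) = - Real.sin (2*π/m) := by
      rw [show 2*((m:ℝ)-1)*π/m = 2*π - 2*π/m by field_simp, Real.sin_sub,
        Real.sin_two_pi, Real.cos_two_pi]; ring
    rw [e0, e1] at h
    have h' : Real.sin (2*π/m) • (Amat (Real.cos (π/m))) ^ m
        = Real.sin (2*π/m) • (1 : Matrix (Fin 2) (Fin 2) ℝ) := by rw [h]; module
    exact smul_right_injective _ hsin h'

theorem Amat_geom_sum (m : ℕ) (hm : 2 ≤ m) :
    (∑ k ∈ Finset.range m, (Amat (Real.cos (π/m))) ^ k) = 0 := by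
  set c := Real.cos (π/m) with hc
  have hmpos : (0:ℝ) < m := by positivity
  have h2r : (2:ℝ) ≤ m := by exact_mod_cast hm
  have hs : 0 < Real.sin (π/m) := by
    apply Real.sin_pos_of_pos_of_lt_pi
    · positivity
    · rw [div_lt_iff₀ hmpos]
      nlinarith [Real.pi_pos, mul_le_mul_of_nonneg_left h2r Real.pi_pos.le]
  have hdet : (Amat c - 1).det ≠ 0 := by
    have hd : (Amat c - 1).det = 4 * (1 - c^2) := by
      simp [Amat, Matrix.det_fin_two, Matrix.one_apply]; ring
    have hsq : 1 - c^2 = Real.sin (π/m) ^ 2 := by rw [Real.sin_sq, hc]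
    rw [hd, hsq]
    positivity
  have hunit : IsUnit (Amat c - 1) := by
    rw [Matrix.isUnit_iff_isUnit_det]
    exact isUnit_iff_ne_zero.mpr hdet
  have h := geom_sum_mul (Amat c) m
  rw [Amat_pow_eq_one m hm, sub_self] at h
  obtain ⟨u, hu⟩ := hunit
  have h2 : (∑ k ∈ Finset.range m, Amat c ^ k)
      * ((Amat c - 1) * (↑u⁻¹ : Matrix (Fin 2) (Fin 2) ℝ)) = 0 := by
    rw [← mul_assoc, h, zero_mul]
  rwa [← hu, Units.mul_inv, mul_one] at h2

theorem grefl_move (M : CoxeterMatrix B) (k l : B) (v : B →₀ ℝ) (a b : ℝ) :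
    grefl M k (v + a • Finsupp.single k 1 + b • Finsupp.single l 1)
      = v + (-a - 2*(pairL M k v) - 2*(bil M k l)*b) • Finsupp.single k 1
          + b • Finsupp.single l 1 := by
  rw [grefl_apply]
  have hp : pairL M k (v + a • Finsupp.single k 1 + b • Finsupp.single l 1)
      = pairL M k v + a + (bil M k l)*b := by
    simp [map_add, pairL_single', bil_self]; ring
  rw [hp]
  module

theorem comm3 (v : B →₀ ℝ) (x y : B →₀ ℝ) (a b : ℝ) :
    v + a • x + b • y = v + b • y + a • x := by module

theorem pair_step (M : CoxeterMatrix B) (i j : B) (v : B →₀ ℝ) (a b c : ℝ)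
    (hij : bil M i j = -c) (hji : bil M j i = -c) :
    (grefl M i * grefl M j) (v + a • Finsupp.single i 1 + b • Finsupp.single j 1)
      = v + ((4*c^2-1)*a - 2*c*b - 2*(pairL M i v) - 4*c*(pairL M j v)) • Finsupp.single i 1
          + (2*c*a - b - 2*(pairL M j v)) • Finsupp.single j 1 := by
  rw [Module.End.mul_apply, comm3, grefl_move M j i v b a, hji, comm3,
    grefl_move M i j v a _, hij]
  congr 1
  · congr 1
    ring
  · congr 1
    ring

theorem Amat_mulVec (c : ℝ) (w : Fin 2 → ℝ) :
    (Amat c).mulVec w = ![(4*c^2-1) * w 0 - 2*c * w 1, 2*c * w 0 - w 1] := by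
  funext k
  fin_cases k <;> simp [Amat, Matrix.mulVec, dotProduct, Fin.sum_univ_two] <;> ring

theorem pair_pow (M : CoxeterMatrix B) (i j : B) (hij : i ≠ j) (hm : 2 ≤ M i j) :
    (grefl M i * grefl M j) ^ (M i j) = 1 := by
  set m := M i j with hmm
  set c : ℝ := Real.cos (π / m) with hc
  have hbij : bil M i j = -c := bil_ne M hij
  have hbji : bil M j i = -c := by rw [bil_symm]; exact hbij
  apply LinearMap.ext
  intro v
  set p : ℝ := pairL M i v with hp
  set q : ℝ := pairL M j v with hq
  set d : Fin 2 → ℝ := ![-2*p - 4*c*q, -2*q] with hd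
  have hd0 : d 0 = -2*p - 4*c*q := rfl
  have hd1 : d 1 = -2*q := rfl
  have key : ∀ n : ℕ, ((grefl M i * grefl M j) ^ n) v
      = v + (((∑ k ∈ Finset.range n, (Amat c)^k).mulVec d) 0) • Finsupp.single i 1
          + (((∑ k ∈ Finset.range n, (Amat c)^k).mulVec d) 1) • Finsupp.single j 1 := by
    intro n
    induction n with
    | zero => simp
    | succ n ih =>
      rw [pow_succ', Module.End.mul_apply, ih, pair_step M i j v _ _ c hbij hbji,
        geom_sum_succ, Matrix.add_mulVec, ← Matrix.mulVec_mulVec, Amat_mulVec,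
        Matrix.one_mulVec]
      simp only [Pi.add_apply, Matrix.cons_val_zero, Matrix.cons_val_one, Matrix.head_cons,
        hd0, hd1, ← hp, ← hq]
      module
  rw [key m, Amat_geom_sum m hm]
  simp

theorem isLiftable_grefl (M : CoxeterMatrix B) : M.IsLiftable (grefl M) := by
  intro i j
  rcases eq_or_ne i j with rfl | hij
  · rw [M.diagonal, pow_one, grefl_sq]
  · rcases Nat.eq_zero_or_pos (M i j) with h0 | hpos
    · rw [h0, pow_zero]
    · have h1 : M i j ≠ 1 := M.off_diagonal i j hij
      have hm : 2 ≤ M i j := by omega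
      exact pair_pow M i j hij hm


theorem simple_injective_s10 (cs : CoxeterSystem M W) {i j : B}
    (h : cs.simple i = cs.simple j) : i = j := by
  by_contra hij
  have hlift := congrArg (cs.lift ⟨grefl M, isLiftable_grefl M⟩) h
  rw [lift_apply_simple, lift_apply_simple] at hlift
  have h2 := congrArg (fun f : Module.End ℝ (B →₀ ℝ) => (f (Finsupp.single i 1)) i) hlift
  simp only [grefl_apply, pairL_single, bil_self, Finsupp.sub_apply, Finsupp.smul_apply,
    Finsupp.single_eq_same, Finsupp.single_eq_of_ne' (Ne.symm hij), smul_eq_mul] at h2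
  norm_num at h2

end GeomRep

/-! ### Basic facts about the Bruhat order and `Lfun` -/

theorem bruhatLE_refl (cs : CoxeterSystem M W) (w : W) : BruhatLE cs w w := by
  obtain ⟨ω, hred, hw⟩ := cs.exists_reduced_word' w
  exact ⟨ω, hred, hw.symm, ω, List.Sublist.refl ω, hw.symm⟩

theorem BruhatLE.length_le {cs : CoxeterSystem M W} {u w : W} (h : BruhatLE cs u w) :
    cs.length u ≤ cs.length w := by
  obtain ⟨ω, hred, hw, υ, hsub, hu⟩ := h
  calc cs.length u = cs.length (cs.wordProd υ) := by rw [hu]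
    _ ≤ υ.length := cs.length_wordProd_le υ
    _ ≤ ω.length := hsub.length_le
    _ = cs.length w := by rw [← hw]; exact hred.symm

theorem BruhatLE.eq_of_length_ge {cs : CoxeterSystem M W} {u w : W} (h : BruhatLE cs u w)
    (hl : cs.length w ≤ cs.length u) : u = w := by
  obtain ⟨ω, hred, hw, υ, hsub, hu⟩ := h
  have h1 : cs.length u ≤ υ.length := hu ▸ cs.length_wordProd_le υ
  have h2 : ω.length = cs.length w := by rw [← hw]; exact hred.symm
  have h3 : υ = ω := hsub.eq_of_length (le_antisymm hsub.length_le (by omega))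
  rw [← hu, h3, hw]

theorem Lfun_eq_right {cs : CoxeterSystem M W} {J : Set B} {a b : W}
    (hab : BruhatLE cs a b) (hb : MinRep cs J b) : Lfun cs J a b = cs.length b := by
  apply le_antisymm
  · exact Nat.sInf_le ⟨b, hb, hab, bruhatLE_refl cs b, rfl⟩
  · unfold Lfun
    refine le_csInf ⟨cs.length b, b, hb, hab, bruhatLE_refl cs b, rfl⟩ ?_
    rintro n ⟨w, _, _, hbw, rfl⟩
    exact hbw.length_le

theorem Lfun_eq_left {cs : CoxeterSystem M W} {J : Set B} {a b : W}
    (hba : BruhatLE cs b a) (ha : MinRep cs J a) : Lfun cs J a b = cs.length a := by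
  apply le_antisymm
  · exact Nat.sInf_le ⟨a, ha, bruhatLE_refl cs a, hba, rfl⟩
  · unfold Lfun
    refine le_csInf ⟨cs.length a, a, ha, bruhatLE_refl cs a, hba, rfl⟩ ?_
    rintro n ⟨w, _, haw, _, rfl⟩
    exact haw.length_le

/-- if `u = s·u'` and `v = t·u'` are simple chainlike elements of `W^J`
with the same covered element `u'`, then `u ∼ v` if and only if `s = t`. -/
theorem statement_10 (cs : CoxeterSystem M W) (J : Set B) (u v u' : W) (s t : B)
    (lu lv : List B)
    (hlu : Simple cs J lu) (hπu : cs.wordProd lu = u)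
    (hlv : Simple cs J lv) (hπv : cs.wordProd lv = v)
    (hu : Chainlike cs J u) (hv : Chainlike cs J v)
    (hcu : Covers cs J u' u) (hcv : Covers cs J u' v)
    (hus : u = cs.simple s * u') (hvt : v = cs.simple t * u') :
    (Lfun cs J u v = Lfun cs J u' v ∧ Lfun cs J u v = Lfun cs J u u') ↔ s = t := by
  constructor
  · rintro ⟨h1, h2⟩
    have hlu' : cs.length u = cs.length u' + 1 := hcu.2.2.2
    have hlv' : cs.length v = cs.length u' + 1 := hcv.2.2.2
    have huu' : BruhatLE cs u' u := hcu.2.2.1.1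
    have hMRu : MinRep cs J u := hcu.2.1
    have h3 : Lfun cs J u u' = cs.length u := Lfun_eq_left huu' hMRu
    have hune : u ≠ 1 := hu.2.1
    have hlpos : cs.length u ≠ 0 := fun h => hune (cs.length_eq_zero_iff.mp h)
    have hS : Lfun cs J u v = cs.length u := h2.trans h3
    set S := {n | ∃ w : W, MinRep cs J w ∧ BruhatLE cs u w ∧ BruhatLE cs v w ∧
      cs.length w = n} with hSdef
    have hrfl : Lfun cs J u v = sInf S := rfl
    have hSne : S.Nonempty := by
      by_contra hemp
      rw [Set.not_nonempty_iff_eq_empty] at hemp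
      apply hlpos
      rw [← hS, hrfl, hemp, Nat.sInf_empty]
    obtain ⟨w, hwMR, huw, hvw, hwl⟩ := Nat.sInf_mem hSne
    have hwlen : cs.length w = cs.length u := by rw [hwl, ← hrfl, hS]
    have hw_u : u = w := huw.eq_of_length_ge (le_of_eq hwlen)
    have hw_v : v = w := hvw.eq_of_length_ge (by rw [hwlen, hlu', ← hlv'])
    have huv : u = v := hw_u.trans hw_v.symm
    rw [hus, hvt] at huv
    exact simple_injective_s10 cs (mul_right_cancel huv)
  · rintro rfl
    have huv : u = v := by rw [hus, hvt]
    subst huv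
    have hMRu : MinRep cs J u := hcu.2.1
    have huu' : BruhatLE cs u' u := hcu.2.2.1.1
    constructor
    · rw [Lfun_eq_right (bruhatLE_refl cs u) hMRu, Lfun_eq_right huu' hMRu]
    · rw [Lfun_eq_right (bruhatLE_refl cs u) hMRu, Lfun_eq_left huu' hMRu]


end CoxPaper
end

section
/- Let (W,S) be a Coxeter system and J ⊆ S, and suppose the Coxeter graph of (W,S) decomposes into connected components S = S₁ ⊔ ⋯ ⊔ Sₙ. For each i, the subposet Wᴶᵢ = {w ∈ W^J : every generator s ∈ S∖J with s ≤ w lies in Sᵢ} of W^J is order-isomorphic to the quotient poset (W_{Sᵢ})^{Sᵢ ∩ J} with the Bruhat order. -/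
open CoxeterSystem

namespace CoxPaper

variable {B : Type*} {M : CoxeterMatrix B} {W : Type*} [Group W]

/-- The restriction of a Coxeter matrix to a subset of the generators. -/
def restrictMatrix (M : CoxeterMatrix B) (S₁ : Set B) : CoxeterMatrix S₁ where
  M := Matrix.of fun a b => M a.val b.val
  isSymm := by
    ext a b
    simpa only [Matrix.transpose_apply, Matrix.of_apply] using M.isSymm.apply a.val b.val
  diagonal := fun a => M.diagonal a.val
  off_diagonal := fun a b h => M.off_diagonal a.val b.val fun hv => h (Subtype.ext hv)

section Stmt17Aux

variable (cs : CoxeterSystem M W) (S₁ : Set B)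

open Classical in
/-- Sends `s ∈ S₁` to the corresponding element of the subtype, and other `s` to `none`. -/
noncomputable def toSub : B → Option S₁ :=
  fun s => if h : s ∈ S₁ then some ⟨s, h⟩ else none

theorem toSub_of_mem {s : B} (h : s ∈ S₁) : toSub S₁ s = some ⟨s, h⟩ := dif_pos h

theorem toSub_of_not_mem {s : B} (h : s ∉ S₁) : toSub S₁ s = none := dif_neg h

/-- The canonical homomorphism from the Coxeter group of the restricted matrix to `W`. -/
noncomputable def phi : (restrictMatrix M S₁).Group →* W :=
  (restrictMatrix M S₁).toCoxeterSystem.lift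
    ⟨fun a => cs.simple a.val, fun a b => cs.simple_mul_simple_pow a.val b.val⟩

theorem phi_simple (a : S₁) :
    phi cs S₁ ((restrictMatrix M S₁).toCoxeterSystem.simple a) = cs.simple a.val :=
  CoxeterSystem.lift_apply_simple _ _ a

open Classical in
/-- The projection homomorphism `W → W_{S₁}`, killing the simple reflections outside `S₁`. -/
noncomputable def psi (hclosed : ∀ s ∈ S₁, ∀ t : B, t ∉ S₁ → M s t = 2) :
    W →* (restrictMatrix M S₁).Group :=
  cs.lift ⟨fun s => if h : s ∈ S₁ then (restrictMatrix M S₁).toCoxeterSystem.simple ⟨s, h⟩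
      else 1, by
    intro i j
    dsimp only
    by_cases hi : i ∈ S₁ <;> by_cases hj : j ∈ S₁
    · rw [dif_pos hi, dif_pos hj]
      exact (restrictMatrix M S₁).toCoxeterSystem.simple_mul_simple_pow ⟨i, hi⟩ ⟨j, hj⟩
    · rw [dif_pos hi, dif_neg hj, mul_one, hclosed i hi j hj]
      exact (restrictMatrix M S₁).toCoxeterSystem.simple_sq ⟨i, hi⟩
    · rw [dif_neg hi, dif_pos hj, one_mul, M.symmetric i j, hclosed j hj i hi]
      exact (restrictMatrix M S₁).toCoxeterSystem.simple_sq ⟨j, hj⟩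
    · rw [dif_neg hi, dif_neg hj, mul_one, one_pow]⟩

theorem psi_simple_of_mem (hclosed : ∀ s ∈ S₁, ∀ t : B, t ∉ S₁ → M s t = 2)
    {s : B} (h : s ∈ S₁) :
    psi cs S₁ hclosed (cs.simple s) = (restrictMatrix M S₁).toCoxeterSystem.simple ⟨s, h⟩ := by
  unfold psi
  exact (cs.lift_apply_simple _ s).trans (dif_pos h)

theorem psi_simple_of_not_mem (hclosed : ∀ s ∈ S₁, ∀ t : B, t ∉ S₁ → M s t = 2)
    {s : B} (h : s ∉ S₁) :
    psi cs S₁ hclosed (cs.simple s) = 1 := by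
  unfold psi
  exact (cs.lift_apply_simple _ s).trans (dif_neg h)

theorem phi_wordProd (l : List S₁) :
    phi cs S₁ ((restrictMatrix M S₁).toCoxeterSystem.wordProd l)
      = cs.wordProd (l.map Subtype.val) := by
  induction l with
  | nil => simp [CoxeterSystem.wordProd_nil]
  | cons a t ih =>
    rw [CoxeterSystem.wordProd_cons, List.map_cons, CoxeterSystem.wordProd_cons, map_mul,
      phi_simple, ih]

theorem psi_wordProd (hclosed : ∀ s ∈ S₁, ∀ t : B, t ∉ S₁ → M s t = 2) (l : List B) :
    psi cs S₁ hclosed (cs.wordProd l)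
      = (restrictMatrix M S₁).toCoxeterSystem.wordProd (l.filterMap (toSub S₁)) := by
  induction l with
  | nil => simp [CoxeterSystem.wordProd_nil]
  | cons a t ih =>
    rw [CoxeterSystem.wordProd_cons, map_mul, ih]
    by_cases ha : a ∈ S₁
    · rw [psi_simple_of_mem cs S₁ hclosed ha,
        List.filterMap_cons_some (toSub_of_mem S₁ ha), CoxeterSystem.wordProd_cons]
    · rw [psi_simple_of_not_mem cs S₁ hclosed ha, one_mul,
        List.filterMap_cons_none (toSub_of_not_mem S₁ ha)]

theorem psi_phi (hclosed : ∀ s ∈ S₁, ∀ t : B, t ∉ S₁ → M s t = 2)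
    (g : (restrictMatrix M S₁).Group) :
    psi cs S₁ hclosed (phi cs S₁ g) = g := by
  have h : (psi cs S₁ hclosed).comp (phi cs S₁) = MonoidHom.id _ := by
    apply (restrictMatrix M S₁).toCoxeterSystem.ext_simple
    intro a
    rw [MonoidHom.comp_apply, MonoidHom.id_apply, phi_simple,
      psi_simple_of_mem cs S₁ hclosed a.2]
  exact DFunLike.congr_fun h g

theorem length_psi_le (hclosed : ∀ s ∈ S₁, ∀ t : B, t ∉ S₁ → M s t = 2) (u : W) :
    (restrictMatrix M S₁).toCoxeterSystem.length (psi cs S₁ hclosed u) ≤ cs.length u := by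
  obtain ⟨l, hlen, rfl⟩ := cs.exists_reduced_word u
  rw [psi_wordProd]
  exact le_trans ((restrictMatrix M S₁).toCoxeterSystem.length_wordProd_le _)
    (le_trans (List.length_filterMap_le _ _) hlen.ge)

theorem length_phi (hclosed : ∀ s ∈ S₁, ∀ t : B, t ∉ S₁ → M s t = 2)
    (g : (restrictMatrix M S₁).Group) :
    cs.length (phi cs S₁ g) = (restrictMatrix M S₁).toCoxeterSystem.length g := by
  apply le_antisymm
  · obtain ⟨l, hlen, rfl⟩ := (restrictMatrix M S₁).toCoxeterSystem.exists_reduced_word g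
    rw [phi_wordProd]
    exact le_trans (cs.length_wordProd_le _) (by rw [List.length_map, hlen])
  · calc (restrictMatrix M S₁).toCoxeterSystem.length g
        = (restrictMatrix M S₁).toCoxeterSystem.length (psi cs S₁ hclosed (phi cs S₁ g)) := by
          rw [psi_phi]
      _ ≤ cs.length (phi cs S₁ g) := length_psi_le cs S₁ hclosed _

theorem bruhat_phi_iff (hclosed : ∀ s ∈ S₁, ∀ t : B, t ∉ S₁ → M s t = 2)
    (u g : (restrictMatrix M S₁).Group) :
    BruhatLE (restrictMatrix M S₁).toCoxeterSystem u g ↔ BruhatLE cs (phi cs S₁ u) (phi cs S₁ g)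
    := by
  constructor
  · rintro ⟨ω, hred, rfl, υ, hsub, rfl⟩
    refine ⟨ω.map Subtype.val, ?_, (phi_wordProd cs S₁ ω).symm,
      υ.map Subtype.val, hsub.map _, (phi_wordProd cs S₁ υ).symm⟩
    unfold CoxeterSystem.IsReduced
    rw [← phi_wordProd, length_phi cs S₁ hclosed, List.length_map]
    exact hred
  · rintro ⟨ω, hred, hprod, υ, hsub, hu⟩
    refine ⟨ω.filterMap (toSub S₁), ?_, ?_, υ.filterMap (toSub S₁), hsub.filterMap _, ?_⟩
    · unfold CoxeterSystem.IsReduced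
      apply le_antisymm ((restrictMatrix M S₁).toCoxeterSystem.length_wordProd_le _)
      calc (ω.filterMap (toSub S₁)).length ≤ ω.length := List.length_filterMap_le _ _
        _ = cs.length (cs.wordProd ω) := hred.symm
        _ = (restrictMatrix M S₁).toCoxeterSystem.length g := by
            rw [hprod, length_phi cs S₁ hclosed]
        _ = (restrictMatrix M S₁).toCoxeterSystem.length
              ((restrictMatrix M S₁).toCoxeterSystem.wordProd (ω.filterMap (toSub S₁))) := by
            rw [← psi_wordProd cs S₁ hclosed, hprod, psi_phi]
    · rw [← psi_wordProd cs S₁ hclosed, hprod, psi_phi]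
    · rw [← psi_wordProd cs S₁ hclosed, hu, psi_phi]

theorem all_mem_of_length_filterMap (l : List B)
    (h : (l.filterMap (toSub S₁)).length = l.length) : ∀ s ∈ l, s ∈ S₁ := by
  induction l with
  | nil => simp
  | cons a t ih =>
    by_cases ha : a ∈ S₁
    · intro s hs
      rcases List.mem_cons.mp hs with rfl | hs
      · exact ha
      · refine ih ?_ s hs
        rw [List.filterMap_cons_some (toSub_of_mem S₁ ha), List.length_cons,
          List.length_cons] at h
        exact Nat.succ_injective h
    · exfalso
      rw [List.filterMap_cons_none (toSub_of_not_mem S₁ ha), List.length_cons] at h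
      exact absurd (h ▸ List.length_filterMap_le (toSub S₁) t) (by omega)

theorem map_val_filterMap_toSub (l : List B) (h : ∀ s ∈ l, s ∈ S₁) :
    (l.filterMap (toSub S₁)).map Subtype.val = l := by
  induction l with
  | nil => simp
  | cons a t ih =>
    rw [List.filterMap_cons_some (toSub_of_mem S₁ (h a List.mem_cons_self)),
      List.map_cons, ih fun s hs => h s (List.mem_cons_of_mem a hs)]

theorem phi_psi_wordProd_of_mem (hclosed : ∀ s ∈ S₁, ∀ t : B, t ∉ S₁ → M s t = 2)
    (l : List B) (h : ∀ s ∈ l, s ∈ S₁) :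
    phi cs S₁ (psi cs S₁ hclosed (cs.wordProd l)) = cs.wordProd l := by
  rw [psi_wordProd, phi_wordProd, map_val_filterMap_toSub S₁ l h]

theorem commute_simple_simple {a b : B} (h2 : M a b = 2) :
    Commute (cs.simple a) (cs.simple b) := by
  have h := cs.simple_mul_simple_pow a b
  rw [h2, sq] at h
  have h' : cs.simple a * cs.simple b = (cs.simple a * cs.simple b)⁻¹ :=
    eq_inv_of_mul_eq_one_left h
  rw [mul_inv_rev, cs.inv_simple, cs.inv_simple] at h'
  exact h'

theorem commute_simple_phi (hclosed : ∀ s ∈ S₁, ∀ t : B, t ∉ S₁ → M s t = 2)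
    {a : B} (ha : a ∉ S₁) (g : (restrictMatrix M S₁).Group) :
    Commute (cs.simple a) (phi cs S₁ g) := by
  obtain ⟨l, -, rfl⟩ := (restrictMatrix M S₁).toCoxeterSystem.exists_reduced_word g
  rw [phi_wordProd]
  unfold CoxeterSystem.wordProd
  apply Commute.list_prod_right
  intro x hx
  obtain ⟨b, hb, rfl⟩ := List.mem_map.mp hx
  obtain ⟨c, hc, rfl⟩ := List.mem_map.mp hb
  exact (commute_simple_simple cs (hclosed c.val c.2 a ha)).symm

theorem wordProd_inv_mul_phi_psi_mem (hclosed : ∀ s ∈ S₁, ∀ t : B, t ∉ S₁ → M s t = 2)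
    (J : Set B) (l : List B) (h : ∀ s ∈ l, s ∈ S₁ ∨ s ∈ J) :
    (cs.wordProd l)⁻¹ * phi cs S₁ (psi cs S₁ hclosed (cs.wordProd l)) ∈ Parabolic cs J := by
  induction l with
  | nil =>
    rw [CoxeterSystem.wordProd_nil, map_one, map_one, mul_one, inv_one]
    exact one_mem _
  | cons a t ih =>
    have ht := ih fun s hs => h s (List.mem_cons_of_mem a hs)
    rw [cs.wordProd_cons, mul_inv_rev, map_mul, map_mul]
    by_cases ha : a ∈ S₁
    · rw [psi_simple_of_mem cs S₁ hclosed ha, phi_simple]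
      simpa [mul_assoc] using ht
    · rw [psi_simple_of_not_mem cs S₁ hclosed ha, map_one, one_mul]
      have hc := (commute_simple_phi cs S₁ hclosed ha
        (psi cs S₁ hclosed (cs.wordProd t))).inv_left
      rw [mul_assoc, hc.eq, ← mul_assoc]
      refine mul_mem ht (inv_mem (Subgroup.subset_closure ?_))
      exact ⟨a, (h a List.mem_cons_self).resolve_left ha, rfl⟩

theorem phi_psi_eq_self (hclosed : ∀ s ∈ S₁, ∀ t : B, t ∉ S₁ → M s t = 2)
    {J : Set B} {w : W} (hmin : MinRep cs J w)
    (hsupp : ∀ s : B, s ∉ J → BruhatLE cs (cs.simple s) w → s ∈ S₁) :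
    phi cs S₁ (psi cs S₁ hclosed w) = w := by
  obtain ⟨l, hlen, rfl⟩ := cs.exists_reduced_word w
  have hred : cs.IsReduced l := hlen
  have hmem : ∀ s ∈ l, s ∈ S₁ ∨ s ∈ J := by
    intro s hs
    by_cases hJ : s ∈ J
    · exact Or.inr hJ
    · exact Or.inl (hsupp s hJ
        ⟨l, hred, rfl, [s], List.singleton_sublist.mpr hs, cs.wordProd_singleton s⟩)
  have h1 : cs.length (cs.wordProd l)
      ≤ cs.length (phi cs S₁ (psi cs S₁ hclosed (cs.wordProd l))) :=
    hmin _ (wordProd_inv_mul_phi_psi_mem cs S₁ hclosed J l hmem)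
  have h2 : (l.filterMap (toSub S₁)).length = l.length := by
    apply le_antisymm (List.length_filterMap_le _ _)
    calc l.length = cs.length (cs.wordProd l) := hlen.symm
      _ ≤ cs.length (phi cs S₁ (psi cs S₁ hclosed (cs.wordProd l))) := h1
      _ = (restrictMatrix M S₁).toCoxeterSystem.length (psi cs S₁ hclosed (cs.wordProd l)) :=
          length_phi cs S₁ hclosed _
      _ ≤ (l.filterMap (toSub S₁)).length := by
          rw [psi_wordProd cs S₁ hclosed]
          exact (restrictMatrix M S₁).toCoxeterSystem.length_wordProd_le _
  exact phi_psi_wordProd_of_mem cs S₁ hclosed l (all_mem_of_length_filterMap S₁ l h2)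

theorem psi_mem_parabolic (hclosed : ∀ s ∈ S₁, ∀ t : B, t ∉ S₁ → M s t = 2)
    {J : Set B} {x : W} (h : x ∈ Parabolic cs J) :
    psi cs S₁ hclosed x
      ∈ Parabolic (restrictMatrix M S₁).toCoxeterSystem {a : S₁ | a.val ∈ J} := by
  refine Subgroup.closure_le (K := Subgroup.comap (psi cs S₁ hclosed)
    (Parabolic (restrictMatrix M S₁).toCoxeterSystem {a : S₁ | a.val ∈ J})) |>.mpr ?_ h
  rintro _ ⟨s, hs, rfl⟩
  simp only [SetLike.mem_coe, Subgroup.mem_comap]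
  by_cases h1 : s ∈ S₁
  · rw [psi_simple_of_mem cs S₁ hclosed h1]
    exact Subgroup.subset_closure ⟨⟨s, h1⟩, hs, rfl⟩
  · rw [psi_simple_of_not_mem cs S₁ hclosed h1]
    exact one_mem _

theorem phi_mem_parabolic {J : Set B} {x : (restrictMatrix M S₁).Group}
    (h : x ∈ Parabolic (restrictMatrix M S₁).toCoxeterSystem {a : S₁ | a.val ∈ J}) :
    phi cs S₁ x ∈ Parabolic cs J := by
  refine Subgroup.closure_le (K := Subgroup.comap (phi cs S₁)
    (Parabolic cs J)) |>.mpr ?_ h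
  rintro _ ⟨a, ha, rfl⟩
  simp only [SetLike.mem_coe, Subgroup.mem_comap]
  rw [phi_simple]
  exact Subgroup.subset_closure ⟨a.val, ha, rfl⟩

theorem minRep_phi (hclosed : ∀ s ∈ S₁, ∀ t : B, t ∉ S₁ → M s t = 2)
    {J : Set B} {g : (restrictMatrix M S₁).Group}
    (h : MinRep (restrictMatrix M S₁).toCoxeterSystem {a : S₁ | a.val ∈ J} g) :
    MinRep cs J (phi cs S₁ g) := by
  intro u hu
  have h2 : psi cs S₁ hclosed ((phi cs S₁ g)⁻¹ * u)
      ∈ Parabolic (restrictMatrix M S₁).toCoxeterSystem {a : S₁ | a.val ∈ J} :=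
    psi_mem_parabolic cs S₁ hclosed hu
  rw [map_mul, map_inv, psi_phi] at h2
  have h3 := h (psi cs S₁ hclosed u) h2
  rw [length_phi cs S₁ hclosed]
  exact le_trans h3 (length_psi_le cs S₁ hclosed u)

theorem minRep_psi (hclosed : ∀ s ∈ S₁, ∀ t : B, t ∉ S₁ → M s t = 2)
    {J : Set B} {w : W} (hmin : MinRep cs J w)
    (hphi : phi cs S₁ (psi cs S₁ hclosed w) = w) :
    MinRep (restrictMatrix M S₁).toCoxeterSystem {a : S₁ | a.val ∈ J}
      (psi cs S₁ hclosed w) := by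
  intro u hu
  have h2 : phi cs S₁ ((psi cs S₁ hclosed w)⁻¹ * u) ∈ Parabolic cs J :=
    phi_mem_parabolic cs S₁ hu
  rw [map_mul, map_inv, hphi] at h2
  have h3 := hmin (phi cs S₁ u) h2
  rw [← length_phi cs S₁ hclosed, ← length_phi cs S₁ hclosed, hphi]
  exact h3

theorem support_phi (hclosed : ∀ s ∈ S₁, ∀ t : B, t ∉ S₁ → M s t = 2)
    {g : (restrictMatrix M S₁).Group}
    {s : B} (hs : BruhatLE cs (cs.simple s) (phi cs S₁ g)) : s ∈ S₁ := by
  by_contra hns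
  obtain ⟨ω, hred, hprod, υ, hsub, hu⟩ := hs
  have h2 : (ω.filterMap (toSub S₁)).length = ω.length := by
    apply le_antisymm (List.length_filterMap_le _ _)
    calc ω.length = cs.length (cs.wordProd ω) := hred.symm
      _ = (restrictMatrix M S₁).toCoxeterSystem.length g := by
          rw [hprod, length_phi cs S₁ hclosed]
      _ = (restrictMatrix M S₁).toCoxeterSystem.length
            ((restrictMatrix M S₁).toCoxeterSystem.wordProd (ω.filterMap (toSub S₁))) := by
          rw [← psi_wordProd cs S₁ hclosed, hprod, psi_phi]
      _ ≤ (ω.filterMap (toSub S₁)).length :=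
          (restrictMatrix M S₁).toCoxeterSystem.length_wordProd_le _
  have hall : ∀ t ∈ υ, t ∈ S₁ :=
    fun t ht => all_mem_of_length_filterMap S₁ ω h2 t (hsub.subset ht)
  have h3 : phi cs S₁ (psi cs S₁ hclosed (cs.wordProd υ)) = cs.wordProd υ :=
    phi_psi_wordProd_of_mem cs S₁ hclosed υ hall
  rw [hu, psi_simple_of_not_mem cs S₁ hclosed hns, map_one] at h3
  have h4 := cs.length_simple s
  rw [← h3, cs.length_one] at h4
  exact absurd h4 (by omega)

end Stmt17Aux

/-- if `S₁` is a connected component of the Coxeter graph of `(W,S)`,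
then the subposet `{w ∈ W^J : every s ∈ S∖J with s ≤ w lies in S₁}` of `W^J` is
order-isomorphic to the quotient poset `(W_{S₁})^{S₁ ∩ J}` with the Bruhat order. -/
theorem statement_17 (cs : CoxeterSystem M W) (J S₁ : Set B)
    (hclosed : ∀ s ∈ S₁, ∀ t : B, t ∉ S₁ → M s t = 2)
    (hconn : ∀ s ∈ S₁, ∀ t ∈ S₁,
      Relation.ReflTransGen (fun a b => a ∈ S₁ ∧ b ∈ S₁ ∧ Big M a b) s t) :
    let M' := restrictMatrix M S₁
    let cs' := M'.toCoxeterSystem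
    let J' : Set S₁ := {a | a.val ∈ J}
    ∃ e : {w : W // MinRep cs J w ∧
            ∀ s : B, s ∉ J → BruhatLE cs (cs.simple s) w → s ∈ S₁}
          ≃ {w : M'.Group // MinRep cs' J' w},
      ∀ a b, BruhatLE cs a.val b.val ↔ BruhatLE cs' (e a).val (e b).val := by
  intro M' cs' J'
  refine ⟨{
    toFun := fun w => ⟨psi cs S₁ hclosed w.val,
      minRep_psi cs S₁ hclosed w.2.1 (phi_psi_eq_self cs S₁ hclosed w.2.1 w.2.2)⟩
    invFun := fun g => ⟨phi cs S₁ g.val, minRep_phi cs S₁ hclosed g.2,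
      fun s _ hs => support_phi cs S₁ hclosed hs⟩
    left_inv := fun w => Subtype.ext (phi_psi_eq_self cs S₁ hclosed w.2.1 w.2.2)
    right_inv := fun g => Subtype.ext (psi_phi cs S₁ hclosed g.val) }, ?_⟩
  intro a b
  have ha := phi_psi_eq_self cs S₁ hclosed a.2.1 a.2.2
  have hb := phi_psi_eq_self cs S₁ hclosed b.2.1 b.2.2
  show BruhatLE cs a.val b.val
    ↔ BruhatLE (restrictMatrix M S₁).toCoxeterSystem (psi cs S₁ hclosed a.val)
        (psi cs S₁ hclosed b.val)
  rw [bruhat_phi_iff cs S₁ hclosed, ha, hb]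

end CoxPaper
end
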